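/- For every real $\beta>0$ and $\delta>0$, the function $Z(x)=\dfrac{\delta^\beta-|x|^\beta}{\delta^\beta+|x|^\beta}$ satisfies $-\Delta Z(x)=2\beta^2\,\dfrac{\delta^\beta\,|x|^{\beta-2}}{(\delta^\beta+|x|^\beta)^2}\,Z(x)$ for all $x\in\mathbb{R}^2\setminus\{0\}$. -/

import Mathlib

open Real

local notation "E2" => EuclideanSpace ℝ (Fin 2)


lemma aux_phi_deriv (a c : ℝ) (ha : 0 < a) (t : ℝ) (ht : 0 < t) :
    HasDerivAt (fun t : ℝ => (a - t^c)/(a + t^c))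
      ((-2*a*c) * t^c / (t * (a + t^c)^2)) t := by
  have hden : 0 < a + t^c := by positivity
  have hu : HasDerivAt (fun t : ℝ => t^c) (c * t^c / t) t := by
    have h := Real.hasDerivAt_rpow_const (x := t) (p := c) (Or.inl ht.ne')
    convert h using 1
    rw [rpow_sub ht, rpow_one]
    ring
  have h := ((hasDerivAt_const t a).sub hu).div ((hasDerivAt_const t a).add hu) hden.ne'
  refine h.congr_deriv ?_
  simp only [Pi.add_apply, Pi.sub_apply, Pi.mul_apply, Pi.pow_apply, id]
  field_simp
  ring

lemma aux_psi_deriv (a c : ℝ) (ha : 0 < a) (t : ℝ) (ht : 0 < t) :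
    HasDerivAt (fun t : ℝ => (-2*a*c) * t^c / (t * (a + t^c)^2))
      (((-2*a*c) * t^c * ((c-1)*(a+t^c) - 2*c*t^c)) / (t^2 * (a+t^c)^3)) t := by
  have hden : 0 < a + t^c := by positivity
  have hu : HasDerivAt (fun t : ℝ => t^c) (c * t^c / t) t := by
    have h := Real.hasDerivAt_rpow_const (x := t) (p := c) (Or.inl ht.ne')
    convert h using 1
    rw [rpow_sub ht, rpow_one]
    ring
  have hd := (hasDerivAt_id t).mul (((hasDerivAt_const t a).add hu).pow 2)
  have hd0 : t * (a + t^c)^2 ≠ 0 := by positivity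
  have h := (hu.const_mul (-2*a*c)).div hd hd0
  refine h.congr_deriv ?_
  simp only [Pi.add_apply, Pi.sub_apply, Pi.mul_apply, Pi.pow_apply, id]
  field_simp
  ring


theorem stmt16 (β δ : ℝ) (hβ : 0 < β) (hδ : 0 < δ)
    (Z : EuclideanSpace ℝ (Fin 2) → ℝ)
    (hZ : ∀ x : EuclideanSpace ℝ (Fin 2),
      Z x = (δ^β - ‖x‖^β)/(δ^β + ‖x‖^β)) :
    ∀ x : EuclideanSpace ℝ (Fin 2), x ≠ 0 →
      -(∑ i : Fin 2, iteratedFDeriv ℝ 2 Z x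
          ![EuclideanSpace.single i 1, EuclideanSpace.single i 1]) =
        2*β^2 * (δ^β * ‖x‖^(β-2) / (δ^β + ‖x‖^β)^2) * Z x := by
  intro x hx
  set a := δ^β with ha
  set c := β/2 with hc
  have hap : 0 < a := rpow_pos_of_pos hδ β
  set φ : ℝ → ℝ := fun t => (a - t^c)/(a + t^c) with hφdef
  set ψ : ℝ → ℝ := fun t => (-2*a*c) * t^c / (t * (a + t^c)^2) with hψdef
  set ψ2 : ℝ → ℝ := fun t => ((-2*a*c) * t^c * ((c-1)*(a+t^c) - 2*c*t^c)) / (t^2 * (a+t^c)^3) with hψ2def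
  have hsq : ∀ y : E2, ((‖y‖^2 : ℝ))^c = ‖y‖^β := by
    intro y
    rw [← Real.rpow_natCast ‖y‖ 2, ← Real.rpow_mul (norm_nonneg y)]
    congr 1
    rw [hc]; push_cast; ring
  have hq : ∀ y : E2, HasFDerivAt (fun y : E2 => ‖y‖^2) (2 • innerSL ℝ y) y :=
    fun y => (hasStrictFDerivAt_norm_sq y).hasFDerivAt
  have hZφ : Z = fun y : E2 => φ (‖y‖^2) := by
    funext y
    rw [hZ y, hφdef]
    simp only
    rw [hsq y]
  have hZd : ∀ y : E2, y ≠ 0 →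
      HasFDerivAt Z ((2 * ψ (‖y‖^2)) • (innerSL ℝ y : E2 →L[ℝ] ℝ)) y := by
    intro y hy
    have hy2 : (0:ℝ) < ‖y‖^2 := by
      have : ‖y‖ ≠ 0 := norm_ne_zero_iff.mpr hy
      positivity
    have h := (aux_phi_deriv a c hap _ hy2).comp_hasFDerivAt y (hq y)
    rw [hZφ]
    refine h.congr_fderiv ?_
    ext v
    simp only [ContinuousLinearMap.smul_apply, ContinuousLinearMap.coe_smul', Pi.smul_apply,
      smul_eq_mul, hψdef]
    ring
  have hr : 0 < ‖x‖ := norm_pos_iff.mpr hx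
  
  have hs0 : (0:ℝ) < ‖x‖^2 := by positivity
  set J : E2 →L[ℝ] (E2 →L[ℝ] ℝ) := innerSL ℝ with hJdef
  have hcder : HasFDerivAt (fun y : E2 => 2 * ψ (‖y‖^2))
      ((2 * ψ2 (‖x‖^2)) • (2 • (innerSL ℝ x : E2 →L[ℝ] ℝ))) x := by
    have h := ((aux_psi_deriv a c hap _ hs0).comp_hasFDerivAt x (hq x)).const_mul 2
    refine h.congr_fderiv ?_
    ext v
    simp only [ContinuousLinearMap.smul_apply, ContinuousLinearMap.coe_smul', Pi.smul_apply,
      smul_eq_mul, hψ2def]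
    ring
  have hGd : HasFDerivAt (fun y : E2 => (2 * ψ (‖y‖^2)) • J y)
      ((2 * ψ (‖x‖^2)) • J +
        ((2 * ψ2 (‖x‖^2)) • (2 • (innerSL ℝ x : E2 →L[ℝ] ℝ))).smulRight (J x)) x :=
    hcder.smul J.hasFDerivAt
  have hfd2 : fderiv ℝ (fderiv ℝ Z) x =
      (2 * ψ (‖x‖^2)) • J +
        ((2 * ψ2 (‖x‖^2)) • (2 • (innerSL ℝ x : E2 →L[ℝ] ℝ))).smulRight (J x) := by
    have hev : fderiv ℝ Z =ᶠ[nhds x]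
        fun y : E2 => (2 * ψ (‖y‖^2)) • J y := by
      filter_upwards [isOpen_compl_singleton.mem_nhds
        (by simpa using hx : x ∈ ({0} : Set E2)ᶜ)] with y hy
      exact (hZd y (by simpa using hy)).fderiv
    rw [hev.fderiv_eq, hGd.fderiv]
  have hLHS : ∀ i : Fin 2, iteratedFDeriv ℝ 2 Z x
      ![EuclideanSpace.single i 1, EuclideanSpace.single i 1]
      = 2 * ψ (‖x‖^2) + 2 * ψ2 (‖x‖^2) * (2 * x i) * x i := by
    intro i
    have h1 : (innerSL ℝ) x (EuclideanSpace.single i 1) = x i := by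
      simp [EuclideanSpace.inner_single_right]
    have h2 : (innerSL ℝ) (EuclideanSpace.single i (1:ℝ)) (EuclideanSpace.single i 1) = 1 := by
      simp [EuclideanSpace.inner_single_right, EuclideanSpace.single_apply]
    rw [iteratedFDeriv_two_apply, hfd2]
    simp only [Matrix.cons_val_zero, Matrix.cons_val_one, Matrix.head_cons,
      ContinuousLinearMap.add_apply, ContinuousLinearMap.smul_apply,
      ContinuousLinearMap.smulRight_apply, hJdef, h1, h2, smul_eq_mul, nsmul_eq_mul,
      Nat.cast_ofNat]
    ring
  have hxx : x 0 * x 0 + x 1 * x 1 = ‖x‖^2 := by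
    rw [EuclideanSpace.norm_eq, sq_sqrt (by positivity)]
    simp [Fin.sum_univ_two, sq_abs]
    ring
  have hsum : (2 * ψ (‖x‖^2) + 2 * ψ2 (‖x‖^2) * (2*x 0) * x 0) +
      (2 * ψ (‖x‖^2) + 2 * ψ2 (‖x‖^2) * (2*x 1) * x 1) =
      4 * ψ (‖x‖^2) + 4 * ψ2 (‖x‖^2) * ‖x‖^2 := by
    linear_combination (4 * ψ2 (‖x‖^2)) * hxx
  have hb2 : ‖x‖^(β-2) = (‖x‖^2)^c / ‖x‖^2 := by
    have h22 : ‖x‖^(2:ℝ) = ‖x‖^(2:ℕ) := by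
      rw [← Real.rpow_natCast ‖x‖ 2]; norm_num
    rw [rpow_sub hr, hsq x, h22]
  rw [Fin.sum_univ_two, hLHS 0, hLHS 1, hsum, hZ x, ← hsq x, hb2, hψdef, hψ2def]
  simp only
  rw [hc]
  have hu0 : (0:ℝ) < (‖x‖^2)^(β/2) := rpow_pos_of_pos hs0 _
  generalize hU : ((‖x‖^2 : ℝ))^(β/2) = u at hu0 ⊢
  generalize hS : (‖x‖^2 : ℝ) = S at hs0 ⊢
  have hd3 : (0:ℝ) < a + u := by positivity
  field_simp
  ring
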